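/- Let X ∈ (R^d)^N be generic, let I ⊆ {1,...,N} with 1 ≤ #I < d, and suppose there exists j ∈ {1,...,N} \ I with ⟨w_I, x^{(j)}⟩ = t_I. Then for J = I ∪ {j} one has t_J = t_I and w_J = w_I. -/

import Mathlib

open Real Set
open scoped RealInnerProductSpace

noncomputable section

/-- A point set is generic if every subfamily of at most `d` of its points is linearly
independent in `ℝ^d`. -/
def Generic {d N : ℕ} (X : Fin N → EuclideanSpace ℝ (Fin d)) : Prop :=
  ∀ I : Finset (Fin N), I.card ≤ d → LinearIndependent ℝ (fun i : I => X i)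

/-- The Gram matrix `X_I^T X_I` of the subfamily of points indexed by `I`. -/
def Gram {d N : ℕ} (X : Fin N → EuclideanSpace ℝ (Fin d)) (I : Finset (Fin N)) :
    Matrix I I ℝ :=
  fun i j => ⟪X i, X j⟫

/-- `t_I = (1^T (X_I^T X_I)^{-1} 1)^{-1/2}`. -/
def tI {d N : ℕ} (X : Fin N → EuclideanSpace ℝ (Fin d)) (I : Finset (Fin N)) : ℝ :=
  (Real.sqrt (∑ i : I, ∑ j : I, (Gram X I)⁻¹ i j))⁻¹

/-- `w_I = t_I X_I (X_I^T X_I)^{-1} 1`. -/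
def wI {d N : ℕ} (X : Fin N → EuclideanSpace ℝ (Fin d)) (I : Finset (Fin N)) :
    EuclideanSpace ℝ (Fin d) :=
  tI X I • ∑ i : I, (∑ j : I, (Gram X I)⁻¹ i j) • X i

open Matrix

lemma dot_gram {d N : ℕ} (X : Fin N → EuclideanSpace ℝ (Fin d)) (I : Finset (Fin N))
    (x : I → ℝ) :
    dotProduct x (Gram X I *ᵥ x) = ⟪∑ i : I, x i • X i, ∑ i : I, x i • X i⟫ := by
  simp only [dotProduct, Matrix.mulVec, Gram, sum_inner, inner_sum,
    real_inner_smul_left, real_inner_smul_right, Finset.mul_sum]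
  refine Finset.sum_congr rfl fun i _ => Finset.sum_congr rfl fun k _ => ?_
  rw [real_inner_comm (X ↑k)]; ring

lemma gram_posDef {d N : ℕ} (X : Fin N → EuclideanSpace ℝ (Fin d)) (I : Finset (Fin N))
    (h : LinearIndependent ℝ (fun i : I => X i)) : (Gram X I).PosDef := by
  refine Matrix.PosDef.of_dotProduct_mulVec_pos ?_ ?_
  · ext i k
    simp only [Matrix.conjTranspose_apply, Gram, star_trivial]
    exact real_inner_comm _ _
  · intro x hx
    have hst : star x = x := by simp
    rw [hst, dot_gram]
    have hv : (∑ i : I, x i • X i) ≠ 0 := by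
      intro h0
      apply hx
      funext i
      exact (Fintype.linearIndependent_iff.mp h) x h0 i
    have h1 : ⟪(∑ i : I, x i • X i), (∑ i : I, x i • X i)⟫ ≠ 0 := inner_self_ne_zero.mpr hv
    exact lt_of_le_of_ne real_inner_self_nonneg (Ne.symm h1)

lemma sum_insert_subtype {α : Type*} [DecidableEq α] {M : Type*} [AddCommMonoid M]
    (I : Finset α) (j : α) (hj : j ∉ I) (f : α → M) :
    ∑ k : (insert j I : Finset α), f ↑k = f j + ∑ i : I, f ↑i := by
  rw [Finset.sum_coe_sort, Finset.sum_coe_sort, Finset.sum_insert hj]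

/-- adding an index `j ∉ I` with `⟪w_I, x^{(j)}⟫ = t_I` leaves `t_I` and
`w_I` unchanged. -/
theorem tI_wI_insert {d N : ℕ} (X : Fin N → EuclideanSpace ℝ (Fin d))
    (hgen : Generic X) (I : Finset (Fin N)) (hI : I.Nonempty) (hId : I.card < d)
    (j : Fin N) (hj : j ∉ I) (hjw : ⟪wI X I, X j⟫ = tI X I) :
    tI X (insert j I) = tI X I ∧ wI X (insert j I) = wI X I := by
  classical
  have hJcard : (insert j I).card ≤ d := by
    rw [Finset.card_insert_of_notMem hj]; omega
  have hliI := hgen I hId.le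
  have hliJ := hgen _ hJcard
  have hGI := gram_posDef X I hliI
  have hGJ := gram_posDef X (insert j I) hliJ
  have hdetI : IsUnit (Gram X I).det := hGI.det_pos.ne'.isUnit
  have hdetJ : IsUnit (Gram X (insert j I)).det := hGJ.det_pos.ne'.isUnit
  set cI : I → ℝ := (Gram X I)⁻¹ *ᵥ (fun _ => 1) with hcIdef
  have hrow : ∀ i : I, (∑ k : I, (Gram X I)⁻¹ i k) = cI i := by
    intro i; simp [hcIdef, Matrix.mulVec, dotProduct]
  have hGcI : Gram X I *ᵥ cI = fun _ => (1:ℝ) := by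
    rw [hcIdef, Matrix.mulVec_mulVec, Matrix.mul_nonsing_inv _ hdetI, Matrix.one_mulVec]
  have hone : (fun _ : I => (1:ℝ)) ≠ 0 := by
    obtain ⟨i, hi⟩ := hI
    intro h; exact one_ne_zero (congrFun h ⟨i, hi⟩)
  have hsI : 0 < ∑ i : I, ∑ k : I, (Gram X I)⁻¹ i k := by
    have h2 := (hGI.inv).dotProduct_mulVec_pos hone
    simpa [dotProduct, Matrix.mulVec] using h2
  have htpos : 0 < tI X I := by
    rw [tI]; exact inv_pos.mpr (Real.sqrt_pos.mpr hsI)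
  have hwinner : ⟪wI X I, X j⟫ = tI X I * ∑ i : I, cI i * ⟪X (i:Fin N), X j⟫ := by
    simp only [wI, real_inner_smul_left, sum_inner, hrow]
  have hS : ∑ i : I, cI i * ⟪X (i:Fin N), X j⟫ = 1 := by
    have := hjw
    rw [hwinner] at this
    have h3 : tI X I * ∑ i : I, cI i * ⟪X (i:Fin N), X j⟫ = tI X I * 1 := by
      rw [mul_one]; exact this
    exact mul_left_cancel₀ htpos.ne' h3
  set V : Fin N → ℝ := fun n => if h : n ∈ I then cI ⟨n, h⟩ else 0 with hVdef
  have hVI : ∀ i : I, V ↑i = cI i := by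
    intro i; simp [hVdef, i.2]
  have hVj : V j = 0 := dif_neg hj
  have hGv : Gram X (insert j I) *ᵥ (fun k => V ↑k) = fun _ => (1:ℝ) := by
    funext k
    have h4 : (Gram X (insert j I) *ᵥ (fun k => V ↑k)) k
        = ∑ l : (insert j I : Finset (Fin N)), ⟪X (k:Fin N), X (l:Fin N)⟫ * V ↑l := by
      simp [Matrix.mulVec, dotProduct, Gram]
    rw [h4, sum_insert_subtype I j hj (fun n => ⟪X (k:Fin N), X n⟫ * V n)]
    rw [hVj, mul_zero, zero_add]
    have h5 : ∑ i : I, ⟪X (k:Fin N), X (i:Fin N)⟫ * V ↑i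
        = ∑ i : I, ⟪X (k:Fin N), X (i:Fin N)⟫ * cI i :=
      Finset.sum_congr rfl fun i _ => by rw [hVI i]
    rw [h5]
    rcases Finset.mem_insert.mp k.2 with hk | hk
    · -- k = j
      have h6 : ∑ i : I, ⟪X (k:Fin N), X (i:Fin N)⟫ * cI i
          = ∑ i : I, cI i * ⟪X (i:Fin N), X j⟫ := by
        refine Finset.sum_congr rfl fun i _ => ?_
        rw [hk, real_inner_comm]; ring
      rw [h6, hS]
    · have h7 := congrFun hGcI ⟨(k:Fin N), hk⟩
      simpa [Matrix.mulVec, dotProduct, Gram] using h7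
  have hvinv : (fun k : (insert j I : Finset (Fin N)) => V ↑k)
      = (Gram X (insert j I))⁻¹ *ᵥ (fun _ => 1) := by
    rw [← hGv, Matrix.mulVec_mulVec, Matrix.nonsing_inv_mul _ hdetJ, Matrix.one_mulVec]
  have hrowJ : ∀ k : (insert j I : Finset (Fin N)),
      (∑ l : (insert j I : Finset (Fin N)), (Gram X (insert j I))⁻¹ k l) = V ↑k := by
    intro k
    have := congrFun hvinv k
    simp only [Matrix.mulVec, dotProduct, mul_one] at this
    exact this.symm
  have hsum_eq : ∑ k : (insert j I : Finset (Fin N)),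
      ∑ l : (insert j I : Finset (Fin N)), (Gram X (insert j I))⁻¹ k l
      = ∑ i : I, ∑ k : I, (Gram X I)⁻¹ i k := by
    calc ∑ k : (insert j I : Finset (Fin N)),
        ∑ l : (insert j I : Finset (Fin N)), (Gram X (insert j I))⁻¹ k l
        = ∑ k : (insert j I : Finset (Fin N)), V ↑k :=
          Finset.sum_congr rfl fun k _ => hrowJ k
      _ = V j + ∑ i : I, V ↑i := sum_insert_subtype I j hj V
      _ = ∑ i : I, cI i := by
          rw [hVj, zero_add]; exact Finset.sum_congr rfl fun i _ => hVI i
      _ = ∑ i : I, ∑ k : I, (Gram X I)⁻¹ i k :=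
          Finset.sum_congr rfl fun i _ => (hrow i).symm
  have htJ : tI X (insert j I) = tI X I := by
    rw [tI, tI, hsum_eq]
  refine ⟨htJ, ?_⟩
  rw [wI, wI, htJ]
  congr 1
  calc ∑ k : (insert j I : Finset (Fin N)),
      (∑ l : (insert j I : Finset (Fin N)), (Gram X (insert j I))⁻¹ k l) • X (k:Fin N)
      = ∑ k : (insert j I : Finset (Fin N)), V ↑k • X (k:Fin N) :=
        Finset.sum_congr rfl fun k _ => by rw [hrowJ k]
    _ = V j • X j + ∑ i : I, V ↑i • X (i:Fin N) :=
        sum_insert_subtype I j hj (fun n => V n • X n)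
    _ = ∑ i : I, cI i • X (i:Fin N) := by
        rw [hVj, zero_smul, zero_add]
        exact Finset.sum_congr rfl fun i _ => by rw [hVI i]
    _ = ∑ i : I, (∑ k : I, (Gram X I)⁻¹ i k) • X (i:Fin N) :=
        Finset.sum_congr rfl fun i _ => by rw [hrow i]
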